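/- Let n ≥ 2 and let x = (x_2,…,x_{2n−1}) be nonzero complex numbers such that T_k(x) ≠ 0 for 1 ≤ k ≤ n−1. Suppose a ∈ ℂ^× and y = (y_1,…,y_{2n−2}) ∈ (ℂ^×)^{2n−2} satisfy Y_{ij}(y) = a·X_{ij}(x) for all 1 ≤ i < j ≤ n+1. Then a = 1/x_n and y = y(x), i.e. y_1 = T_1(x)^{−1}, y_k = x_k·T_k(x)^{−1} for 2 ≤ k ≤ n−1, y_n = 1/x_n, and y_{n+l} = (x_{n+l}/x_n)·T_l(x) for 1 ≤ l ≤ n−2. -/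

import Mathlib

noncomputable section
noncomputable section

/-- `Tf n x k = ∑_{j=k+1}^{n} x_j / x_{n+j-1}` (so `Tf n x n = 0`). -/
def Tf (n : ℕ) (x : ℕ → ℂ) (k : ℕ) : ℂ :=
  ∑ j ∈ Finset.Icc (k + 1) n, x j / x (n + j - 1)

/-- The coefficients `X_{ij}(x)` for `1 ≤ i < j ≤ n+1`. -/
def Xc (n : ℕ) (x : ℕ → ℂ) (i j : ℕ) : ℂ :=
  if j = n + 1 then (if i = n then 1 else x (n + i))
  else if j = n then x (i + 1) + x (n + i) * ∑ m ∈ Finset.Icc (i + 2) n, x m / x (n + m - 1)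
  else x (n + j) * (x (i + 1) + x (n + i) * ∑ m ∈ Finset.Icc (i + 2) j, x m / x (n + m - 1))

/-- The coefficients `Y_{ij}(y)` for `1 ≤ i < j ≤ n+1`. -/
def Yc (n : ℕ) (y : ℕ → ℂ) (i j : ℕ) : ℂ :=
  if j = n + 1 then
    (if i = n then y n
     else if i = n - 1 then y 1 + y n * ∑ m ∈ Finset.Icc 2 (n - 1), y m / y (n + m - 1)
     else y (n + i) * (y 1 + y n * ∑ m ∈ Finset.Icc 2 i, y m / y (n + m - 1)))
  else if j = n then (if i = n - 1 then 1 else y (n + i))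
  else if j = n - 1 then
    y (i + 1) + y (n + i) * ∑ m ∈ Finset.Icc (i + 2) (n - 1), y m / y (n + m - 1)
  else y (n + j) * (y (i + 1) + y (n + i) * ∑ m ∈ Finset.Icc (i + 2) j, y m / y (n + m - 1))

/-- The map `x ↦ y(x)`:
`y_1 = T_1(x)⁻¹`, `y_k = x_k·T_k(x)⁻¹` for `2 ≤ k ≤ n-1`, `y_n = x_n⁻¹`,
`y_{n+l} = (x_{n+l}/x_n)·T_l(x)` for `1 ≤ l ≤ n-2`. -/
def yOf (n : ℕ) (x : ℕ → ℂ) (k : ℕ) : ℂ :=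
  if k = 1 then (Tf n x 1)⁻¹
  else if k ≤ n - 1 then x k * (Tf n x k)⁻¹
  else if k = n then (x n)⁻¹
  else (x k / x n) * Tf n x (k - n)

lemma tf_top (n : ℕ) (x : ℕ → ℂ) : Tf n x n = 0 := by
  unfold Tf; rw [Finset.Icc_eq_empty (by omega)]; simp

lemma tf_rec (n : ℕ) (x : ℕ → ℂ) (k : ℕ) (h : k < n) :
    Tf n x k = x (k+1) / x (n+k) + Tf n x (k+1) := by
  unfold Tf
  have hins : Finset.Icc (k+1) n = insert (k+1) (Finset.Icc (k+2) n) := by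
    ext m; simp only [Finset.mem_Icc, Finset.mem_insert]; omega
  rw [hins, Finset.sum_insert (by simp only [Finset.mem_Icc]; omega),
    show n + (k+1) - 1 = n + k from by omega]

lemma icc_tele (g : ℕ → ℂ) (a : ℕ) (N : ℕ) (h : a ≤ N) :
    ∑ m ∈ Finset.Icc (a+1) N, (g m - g (m-1)) = g N - g a := by
  induction N, h using Nat.le_induction with
  | base => rw [Finset.Icc_eq_empty (by omega)]; simp
  | succ N hN ih =>
    rw [Finset.sum_Icc_succ_top (by omega), ih,
      show N + 1 - 1 = N from rfl]
    ring

/-- if `Y_{ij}(y) = a·X_{ij}(x)` for all `1 ≤ i < j ≤ n+1`, then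
`a = 1/x_n` and `y = y(x)`. -/
theorem stmt1 (n : ℕ) (hn : 2 ≤ n) (x : ℕ → ℂ)
    (hx : ∀ k, 2 ≤ k → k ≤ 2 * n - 1 → x k ≠ 0)
    (hT : ∀ k, 1 ≤ k → k ≤ n - 1 → Tf n x k ≠ 0)
    (a : ℂ) (ha : a ≠ 0) (y : ℕ → ℂ)
    (hy : ∀ k, 1 ≤ k → k ≤ 2 * n - 2 → y k ≠ 0)
    (heq : ∀ i j, 1 ≤ i → i < j → j ≤ n + 1 → Yc n y i j = a * Xc n x i j) :
    a = 1 / x n ∧ ∀ k, 1 ≤ k → k ≤ 2 * n - 2 → y k = yOf n x k := by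
  have hxn : x n ≠ 0 := hx n hn (by omega)
  have hx2n : x (2*n-1) ≠ 0 := hx _ (by omega) (by omega)
  -- a = (x n)⁻¹ from (n-1, n)
  have hA : a = (x n)⁻¹ := by
    have h := heq (n-1) n (by omega) (by omega) (by omega)
    have hY : Yc n y (n-1) n = 1 := by
      unfold Yc; rw [if_neg (by omega), if_pos rfl, if_pos rfl]
    have hX : Xc n x (n-1) n = x n := by
      unfold Xc
      rw [if_neg (by omega), if_pos rfl, show n-1+1 = n from by omega,
        Finset.Icc_eq_empty (by omega)]
      simp
    rw [hY, hX] at h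
    exact eq_inv_of_mul_eq_one_left h.symm
  -- y n = a from (n, n+1)
  have hyn : y n = a := by
    have h := heq n (n+1) (by omega) (by omega) le_rfl
    have hY : Yc n y n (n+1) = y n := by unfold Yc; rw [if_pos rfl, if_pos rfl]
    have hX : Xc n x n (n+1) = 1 := by unfold Xc; rw [if_pos rfl, if_pos rfl]
    rw [hY, hX, mul_one] at h; exact h
  -- y (n+l) for 1 ≤ l ≤ n-2 from (l, n)
  have hclosed : ∀ l, 1 ≤ l → l ≤ n-2 → y (n+l) = (x (n+l) / x n) * Tf n x l := by
    intro l h1 h2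
    have h := heq l n h1 (by omega) (by omega)
    have hY : Yc n y l n = y (n+l) := by
      unfold Yc; rw [if_neg (by omega), if_pos rfl, if_neg (by omega)]
    have hX : Xc n x l n = x (l+1) + x (n+l) * Tf n x (l+1) := by
      unfold Xc; rw [if_neg (by omega), if_pos rfl]; rfl
    have hrec := tf_rec n x l (by omega)
    have hx1 : x (n+l) ≠ 0 := hx (n+l) (by omega) (by omega)
    rw [hY, hX, hA] at h
    rw [h, hrec]
    field_simp
  -- per-term identity for the telescoping sums
  have hterm : ∀ m, 2 ≤ m → m ≤ n-1 → y m = x m * (Tf n x m)⁻¹ →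
      y m / y (n+m-1) = x n * ((Tf n x m)⁻¹ - (Tf n x (m-1))⁻¹) := by
    intro m h1 h2 hym
    have hcl := hclosed (m-1) (by omega) (by omega)
    rw [show n + (m-1) = n+m-1 from by omega] at hcl
    have hrec := tf_rec n x (m-1) (by omega)
    rw [show m-1+1 = m from by omega, show n+(m-1) = n+m-1 from by omega] at hrec
    have hTm : Tf n x m ≠ 0 := hT m (by omega) h2
    have hTm1 : Tf n x (m-1) ≠ 0 := hT (m-1) (by omega) (by omega)
    have hxm : x (n+m-1) ≠ 0 := hx _ (by omega) (by omega)
    have hxm' : x m = x (n+m-1) * (Tf n x (m-1) - Tf n x m) := by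
      rw [hrec]; field_simp; ring
    rw [hym, hcl, hxm']
    field_simp
  -- telescoping sums for the Y side
  have hsum : ∀ K, 1 ≤ K → K ≤ n-1 →
      (∀ m, K+1 ≤ m → m ≤ n-1 → y m = x m * (Tf n x m)⁻¹) →
      ∑ m ∈ Finset.Icc (K+1) (n-1), y m / y (n+m-1)
        = x n * ((Tf n x (n-1))⁻¹ - (Tf n x K)⁻¹) := by
    intro K h1 h2 hind
    have hc : ∑ m ∈ Finset.Icc (K+1) (n-1), y m / y (n+m-1)
        = ∑ m ∈ Finset.Icc (K+1) (n-1),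
            x n * ((Tf n x m)⁻¹ - (Tf n x (m-1))⁻¹) := by
      refine Finset.sum_congr rfl fun m hm => ?_
      rw [Finset.mem_Icc] at hm
      exact hterm m (by omega) hm.2 (hind m hm.1 hm.2)
    rw [hc, ← Finset.mul_sum,
      icc_tele (fun m => (Tf n x m)⁻¹) K (n-1) (by omega)]
  -- relation T(n-1) = x n / x (2n-1)
  have hrn := tf_rec n x (n-1) (by omega)
  rw [show n-1+1 = n from by omega, show n+(n-1) = 2*n-1 from by omega, tf_top] at hrn
  have hTn1 : Tf n x (n-1) ≠ 0 := hT (n-1) (by omega) (by omega)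
  have hxn' : x n = x (2*n-1) * Tf n x (n-1) := by
    rw [hrn]; field_simp; ring
  -- the X-side sum
  have hXsum : ∀ K, 1 ≤ K → K ≤ n-1 →
      ∑ m ∈ Finset.Icc (K+1) (n-1), x m / x (n+m-1)
        = Tf n x K - x n / x (2*n-1) := by
    intro K h1 h2
    have hs := Finset.sum_Icc_succ_top (show K+1 ≤ (n-1)+1 by omega)
      (fun m => x m / x (n+m-1))
    rw [show n-1+1 = n from by omega] at hs
    have hTf : Tf n x K = ∑ m ∈ Finset.Icc (K+1) n, x m / x (n+m-1) := rfl
    rw [hTf, hs, show n+n-1 = 2*n-1 from by omega]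
    ring
  -- the inductive step for y k, 2 ≤ k ≤ n-1
  have hstep : ∀ k, 2 ≤ k → k ≤ n-1 →
      (∀ m, k+1 ≤ m → m ≤ n-1 → y m = x m * (Tf n x m)⁻¹) →
      y k = x k * (Tf n x k)⁻¹ := by
    intro k h1 h2 hind
    have h := heq (k-1) (n-1) (by omega) (by omega) (by omega)
    have hY : Yc n y (k-1) (n-1)
        = y k + y (n+k-1) * ∑ m ∈ Finset.Icc (k+1) (n-1), y m / y (n+m-1) := by
      unfold Yc
      rw [if_neg (by omega), if_neg (by omega), if_pos rfl,
        show k-1+1 = k from by omega, show k-1+2 = k+1 from by omega,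
        show n+(k-1) = n+k-1 from by omega]
    have hX : Xc n x (k-1) (n-1)
        = x (2*n-1) * (x k + x (n+k-1) * ∑ m ∈ Finset.Icc (k+1) (n-1), x m / x (n+m-1)) := by
      unfold Xc
      rw [if_neg (by omega), if_neg (by omega),
        show n+(n-1) = 2*n-1 from by omega,
        show k-1+1 = k from by omega, show k-1+2 = k+1 from by omega,
        show n+(k-1) = n+k-1 from by omega]
    have hcl := hclosed (k-1) (by omega) (by omega)
    rw [show n+(k-1) = n+k-1 from by omega] at hcl
    have hrk := tf_rec n x (k-1) (by omega)
    rw [show k-1+1 = k from by omega, show n+(k-1) = n+k-1 from by omega] at hrk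
    have hTk : Tf n x k ≠ 0 := hT k (by omega) h2
    have hTk1 : Tf n x (k-1) ≠ 0 := hT (k-1) (by omega) (by omega)
    have hxk1 : x (n+k-1) ≠ 0 := hx _ (by omega) (by omega)
    have hxk : x k = x (n+k-1) * (Tf n x (k-1) - Tf n x k) := by
      rw [hrk]; field_simp; ring
    rw [hY, hX, hsum k (by omega) h2 hind, hXsum k (by omega) h2, hA, hcl] at h
    have hyk : y k = (x n)⁻¹ * (x (2*n-1) * (x k + x (n+k-1) * (Tf n x k - x n / x (2*n-1))))
        - (x (n+k-1) / x n * Tf n x (k-1)) * (x n * ((Tf n x (n-1))⁻¹ - (Tf n x k)⁻¹)) := by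
      linear_combination h
    rw [hyk, hxk, hxn']
    field_simp
    ring
  -- downward induction
  have hMain : ∀ k, 2 ≤ k → k ≤ n-1 → y k = x k * (Tf n x k)⁻¹ := by
    have key : ∀ d k, 2 ≤ k → k ≤ n-1 → n-1-k ≤ d → y k = x k * (Tf n x k)⁻¹ := by
      intro d
      induction d with
      | zero =>
        intro k h1 h2 h3
        exact hstep k h1 h2 (fun m hm1 hm2 => (by omega : False).elim)
      | succ d ih =>
        intro k h1 h2 h3
        exact hstep k h1 h2 (fun m hm1 hm2 => ih m (by omega) hm2 (by omega))
    exact fun k h1 h2 => key n k h1 h2 (by omega)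
  -- y 1 from (n-1, n+1)
  have hy1 : y 1 = (Tf n x 1)⁻¹ := by
    have h := heq (n-1) (n+1) (by omega) (by omega) le_rfl
    have hY : Yc n y (n-1) (n+1)
        = y 1 + y n * ∑ m ∈ Finset.Icc 2 (n-1), y m / y (n+m-1) := by
      unfold Yc
      rw [if_pos rfl, if_neg (by omega), if_pos rfl]
    have hX : Xc n x (n-1) (n+1) = x (2*n-1) := by
      unfold Xc
      rw [if_pos rfl, if_neg (by omega), show n+(n-1) = 2*n-1 from by omega]
    have hS := hsum 1 (by omega) (by omega) (fun m hm1 hm2 => hMain m hm1 hm2)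
    rw [show (1:ℕ)+1 = 2 from rfl] at hS
    rw [hY, hX, hyn, hA, hS] at h
    have hT1 : Tf n x 1 ≠ 0 := hT 1 le_rfl (by omega)
    have hyk : y 1 = (x n)⁻¹ * x (2*n-1)
        - (x n)⁻¹ * (x n * ((Tf n x (n-1))⁻¹ - (Tf n x 1)⁻¹)) := by
      linear_combination h
    rw [hyk, hxn']
    field_simp
    ring
  -- assemble
  refine ⟨by rw [hA, one_div], ?_⟩
  intro k hk1 hk2
  unfold yOf
  by_cases h1 : k = 1
  · subst h1; rw [if_pos rfl]; exact hy1
  · rw [if_neg h1]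
    by_cases h2 : k ≤ n-1
    · rw [if_pos h2]; exact hMain k (by omega) h2
    · rw [if_neg h2]
      by_cases h3 : k = n
      · rw [if_pos h3, h3, hyn, hA]
      · rw [if_neg h3]
        have hcl := hclosed (k-n) (by omega) (by omega)
        rw [show n + (k-n) = k from by omega] at hcl
        exact hcl
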